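/- Let T^1 = KR_right(S,A)^1 for a finite semigroup S generated by a finite alphabet A, and let D be the Lyndon–Chiswell length function on T^1. For all α, β, γ ∈ T^1, if α ≠ β and ξ(α,β) < ξ(α,γ), then D(α,β) < D(α,γ). -/

import Mathlib

open scoped Classical

namespace KRHolonomy

/-- Green's quasi-order `≤_J` on a monoid: `a ≤_J b` iff `a ∈ M b M`. -/
def leJ {M : Type*} [Monoid M] (a b : M) : Prop := ∃ x y : M, a = x * b * y

/-- `a <_J b` iff `a ≤_J b` and not `b ≤_J a`. -/
def ltJ {M : Type*} [Monoid M] (a b : M) : Prop := leJ a b ∧ ¬ leJ b a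

/-- Green's quasi-order `≤_R` on a monoid: `a ≤_R b` iff `a ∈ b M`. -/
def leR {M : Type*} [Monoid M] (a b : M) : Prop := ∃ x : M, a = b * x

/-- `a <_R b` iff `a ≤_R b` and not `b ≤_R a`. -/
def ltR {M : Type*} [Monoid M] (a b : M) : Prop := leR a b ∧ ¬ leR b a

/-- Green's quasi-order `≤_L` on a monoid: `a ≤_L b` iff `a ∈ M b`. -/
def leL {M : Type*} [Monoid M] (a b : M) : Prop := ∃ x : M, a = x * b

/-- `a <_L b` iff `a ≤_L b` and not `b ≤_L a`. -/
def ltL {M : Type*} [Monoid M] (a b : M) : Prop := leL a b ∧ ¬ leL b a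

/-- The Dedekind height function: `height x` is the largest `k` such that there is a chain
`x₀ >_J x₁ >_J ⋯ >_J x_k = x`. -/
noncomputable def height {M : Type*} [Monoid M] (x : M) : ℕ :=
  sSup {k | ∃ c : ℕ → M, c k = x ∧ ∀ i < k, ltJ (c (i + 1)) (c i)}

variable {A S : Type*} [Semigroup S]

/-- The edge `(s, a, s·θ(a))` of the right Cayley graph of `(S,A)` is a transition edge:
there is no path in the right Cayley graph from `s·θ(a)` back to `s`. -/
def IsTransitionEdge (θ : FreeMonoid A →* WithOne S) (s : WithOne S) (a : A) : Prop :=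
  ¬ ∃ w : FreeMonoid A, s * θ (FreeMonoid.of a) * θ w = s

/-- The (ordered) sequence of transition edges along the path of the right Cayley graph
starting at `s` and reading the word `u`; an edge is recorded as a pair (source, label). -/
noncomputable def transEdgesFrom (θ : FreeMonoid A →* WithOne S) :
    WithOne S → List A → List (WithOne S × A)
  | _, [] => []
  | s, a :: w =>
      (if IsTransitionEdge θ s a then [(s, a)] else []) ++
        transEdgesFrom θ (s * θ (FreeMonoid.of a)) w

/-- The sequence of transition edges of the path starting at `1` reading `u`. -/
noncomputable def transEdges (θ : FreeMonoid A →* WithOne S) (u : FreeMonoid A) :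
    List (WithOne S × A) :=
  transEdgesFrom θ 1 (FreeMonoid.toList u)

/-- The congruence (`τ_r`, together with `(1,1)`) defining the right Karnofsky–Rhodes
expansion: two words of `A^*` represent the same element of `KR_right(S,A)¹` iff they are
both empty or both nonempty, they have the same image in `S¹` and the same sequence of
transition edges. -/
def KRrel (θ : FreeMonoid A →* WithOne S) (u v : FreeMonoid A) : Prop :=
  (u = 1 ∧ v = 1) ∨
    (u ≠ 1 ∧ v ≠ 1 ∧ θ u = θ v ∧ transEdges θ u = transEdges θ v)

/-- Green's quasi-order `≤_J` on `T¹ = KR_right(S,A)¹`, expressed on word representatives: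
`u ≤_J v` iff `u = p v q` holds in `T¹` for some `p, q ∈ T¹`. -/
def leJT (θ : FreeMonoid A →* WithOne S) (u v : FreeMonoid A) : Prop :=
  ∃ p q : FreeMonoid A, KRrel θ u (p * v * q)

/-- `<_J` on `T¹ = KR_right(S,A)¹`, expressed on word representatives. -/
def ltJT (θ : FreeMonoid A →* WithOne S) (u v : FreeMonoid A) : Prop :=
  leJT θ u v ∧ ¬ leJT θ v u

/-- The Dedekind height function on `T¹ = KR_right(S,A)¹`, expressed on word
representatives: the largest `k` such that there is a chain
`t₀ >_J t₁ >_J ⋯ >_J t_k = t` in `T¹`. -/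
noncomputable def heightT (θ : FreeMonoid A →* WithOne S) (u : FreeMonoid A) : ℕ :=
  sSup {k | ∃ c : ℕ → FreeMonoid A, KRrel θ (c k) u ∧ ∀ i < k, ltJT θ (c (i + 1)) (c i)}

/-- `ℓ = 2 · max { h(s) : s ∈ S¹ }`. -/
noncomputable def ell (S : Type*) [Semigroup S] : ℕ :=
  2 * sSup (Set.range fun s : WithOne S => height s)

/-- `ξ(u,v)`: the largest `i` (with `0 ≤ i ≤ m`, `m` the number of transition edges of `u`)
such that the first `i` transition edges of `u` and of `v` agree. -/
noncomputable def xi (θ : FreeMonoid A →* WithOne S) (u v : FreeMonoid A) : ℕ :=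
  sSup {i | i ≤ (transEdges θ u).length ∧
    (transEdges θ u).take i = (transEdges θ v).take i}

/-- The endpoint of an edge `(s, a)` of the right Cayley graph, namely `s·θ(a)`. -/
def edgeEnd (θ : FreeMonoid A →* WithOne S) (e : WithOne S × A) : WithOne S :=
  e.1 * θ (FreeMonoid.of e.2)

/-- The Lyndon–Chiswell length function `D` on `T¹ = KR_right(S,A)¹`, expressed on word
representatives.  With `k = ξ(u,v)` (and indexing the transition edges from `1` as in the
paper, so that `E_k` sits at list index `k-1`):
`D(u,v) = ℓ` if `u = v` in `T¹`; `D(u,v) = 0` if `u ≠ v` in `T¹` and `k = 0`;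
`D(u,v) = 2·h(end(E_k))` if `k > 0`, `E_{k+1}` and `E'_{k+1}` both exist and have the same
endpoint; and `D(u,v) = 2·h(end(E_k)) - 1` in all remaining cases. -/
noncomputable def lcD (θ : FreeMonoid A →* WithOne S) (u v : FreeMonoid A) : ℕ :=
  if KRrel θ u v then ell S
  else if xi θ u v = 0 then 0
  else
    let k := xi θ u v
    let base := (transEdges θ u)[k - 1]?.elim 0 fun e => height (edgeEnd θ e)
    if ∃ e e', (transEdges θ u)[k]? = some e ∧ (transEdges θ v)[k]? = some e' ∧
        edgeEnd θ e = edgeEnd θ e'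
    then 2 * base
    else 2 * base - 1

/-- The relation `∼` on `C = {(k,α) : 0 ≤ k ≤ ℓ, α ∈ T¹}`:
`(k,α) ∼ (k',β)` iff `k = k'` and `D(α,β) ≥ k`. -/
def simRel (θ : FreeMonoid A →* WithOne S)
    (p q : {p : ℕ × FreeMonoid A // p.1 ≤ ell S}) : Prop :=
  p.val.1 = q.val.1 ∧ lcD θ p.val.2 q.val.2 ≥ p.val.1

/-- The vertex set of the Chiswell tree: `∼`-classes `[k,α]`. -/
def CVert (θ : FreeMonoid A →* WithOne S) : Type _ := Quot (simRel θ)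

/-- The edge relation of the Chiswell graph: the edges are `[k,α] — [k+1,α]`
for `0 ≤ k < ℓ` and `α ∈ T¹`. -/
def edgeRel (θ : FreeMonoid A →* WithOne S) (v w : CVert θ) : Prop :=
  ∃ (k : ℕ) (α : FreeMonoid A) (hk : k + 1 ≤ ell S),
    v = Quot.mk (simRel θ) ⟨(k, α), Nat.le_of_succ_le hk⟩ ∧
    w = Quot.mk (simRel θ) ⟨(k + 1, α), hk⟩

/-- The Chiswell graph `𝒞`. -/
def CGraph (θ : FreeMonoid A →* WithOne S) : SimpleGraph (CVert θ) :=
  SimpleGraph.fromRel (edgeRel θ)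

/-- The depth function of the Chiswell tree: `δ([k,α]) = k`. -/
def depth (θ : FreeMonoid A →* WithOne S) : CVert θ → ℕ :=
  Quot.lift (fun p => p.val.1) (fun _ _ h => h.1)


section AuxMonoid

variable {M : Type*} [Monoid M]

lemma leJ_refl (a : M) : leJ a a := ⟨1, 1, by simp⟩

lemma leJ_trans {a b c : M} (h1 : leJ a b) (h2 : leJ b c) : leJ a c := by
  obtain ⟨x, y, rfl⟩ := h1
  obtain ⟨x', y', rfl⟩ := h2
  exact ⟨x * x', y' * y, by simp [mul_assoc]⟩

lemma ltJ_irrefl (a : M) : ¬ ltJ a a := fun h => h.2 (leJ_refl a)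

lemma ltJ_trans {a b c : M} (h1 : ltJ a b) (h2 : ltJ b c) : ltJ a c :=
  ⟨leJ_trans h1.1 h2.1, fun h => h2.2 (leJ_trans h h1.1)⟩

lemma leR_trans {a b c : M} (h1 : leR a b) (h2 : leR b c) : leR a c := by
  obtain ⟨x, rfl⟩ := h1; obtain ⟨y, rfl⟩ := h2; exact ⟨y * x, by rw [mul_assoc]⟩

lemma exists_idem_pow [Finite M] (x : M) : ∃ n, 0 < n ∧ x ^ n * x ^ n = x ^ n := by
  obtain ⟨a, b, hab, hxy⟩ := Finite.exists_ne_map_eq_of_infinite (fun n : ℕ => x ^ n)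
  wlog hlt : a < b generalizing a b
  · exact this b a hab.symm hxy.symm (by omega)
  set d := b - a with hd
  have hd0 : 0 < d := by omega
  have hstep : ∀ m, a ≤ m → x ^ (m + d) = x ^ m := by
    intro m hm
    have h1 : x ^ (m + d) = x ^ (m - a) * x ^ (a + d) := by
      rw [← pow_add]; congr 1; omega
    have h2 : x ^ m = x ^ (m - a) * x ^ a := by
      rw [← pow_add]; congr 1; omega
    rw [h1, show a + d = b by omega, ← hxy, h2]
  have hmul : ∀ j m, a ≤ m → x ^ (m + j * d) = x ^ m := by
    intro j
    induction j with
    | zero => simp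
    | succ j ih =>
      intro m hm
      have he : m + (j + 1) * d = (m + d) + j * d := by ring
      rw [he, ih _ (by omega), hstep _ hm]
  have hle : a ≤ (a + 1) * d := le_trans (by omega) (Nat.le_mul_of_pos_right _ hd0)
  refine ⟨(a + 1) * d, by positivity, ?_⟩
  rw [← pow_add]
  exact hmul (a + 1) ((a + 1) * d) hle

lemma ltJ_of_ltR [Finite M] {a b : M} (h : ltR a b) : ltJ a b := by
  obtain ⟨⟨x, hx⟩, hnot⟩ := h
  refine ⟨⟨1, x, by rw [one_mul, hx]⟩, ?_⟩
  rintro ⟨p, q, hb⟩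
  apply hnot
  set c := x * q with hc
  have hb' : b = p * b * c := hb.trans (by rw [hx, hc]; simp only [mul_assoc])
  have key : ∀ n, b = p ^ n * b * c ^ n := by
    intro n; induction n with
    | zero => simp
    | succ n ih =>
      calc b = p * b * c := hb'
      _ = p * (p ^ n * b * c ^ n) * c := by rw [← ih]
      _ = p ^ (n + 1) * b * c ^ (n + 1) := by
          rw [pow_succ' p n, pow_succ c n]
          simp only [mul_assoc]
  obtain ⟨n, hn, hidem⟩ := exists_idem_pow c
  have h1 := key n
  have h2 : b * c ^ n = b := by
    conv_lhs => rw [h1]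
    rw [mul_assoc, hidem]
    exact h1.symm
  obtain ⟨n, rfl⟩ : ∃ m, n = m + 1 := ⟨n - 1, by omega⟩
  refine ⟨q * c ^ n, ?_⟩
  calc b = b * c ^ (n + 1) := h2.symm
  _ = b * (c * c ^ n) := by rw [pow_succ' c n]
  _ = a * (q * c ^ n) := by rw [hx, hc]; simp only [mul_assoc]

lemma chain_strict {c : ℕ → M} {k : ℕ} (hc : ∀ i < k, ltJ (c (i + 1)) (c i)) :
    ∀ i j, i < j → j ≤ k → ltJ (c j) (c i) := by
  intro i j
  induction j with
  | zero => omega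
  | succ j ih =>
    intro hij hjk
    rcases Nat.lt_or_ge i j with h | h
    · exact ltJ_trans (hc j (by omega)) (ih h (by omega))
    · have : i = j := by omega
      subst this; exact hc i (by omega)

lemma chain_le_card [Finite M] {c : ℕ → M} {k : ℕ}
    (hc : ∀ i < k, ltJ (c (i + 1)) (c i)) : k ≤ Nat.card M := by
  by_contra h
  push_neg at h
  have : Fintype M := Fintype.ofFinite M
  have hcard : Fintype.card M < Fintype.card (Fin (k + 1)) := by
    rw [Fintype.card_fin]
    have := Nat.card_eq_fintype_card (α := M)
    omega
  obtain ⟨i, j, hne, heq⟩ :=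
    Fintype.exists_ne_map_eq_of_card_lt (fun i : Fin (k + 1) => c i) hcard
  have hvne : (i : ℕ) ≠ (j : ℕ) := fun hv => hne (Fin.ext hv)
  rcases Nat.lt_or_ge (i : ℕ) (j : ℕ) with hij | hij
  · have := chain_strict hc i j hij (by omega)
    rw [heq] at this
    exact ltJ_irrefl _ this
  · have hji : (j : ℕ) < i := by omega
    have := chain_strict hc j i hji (by omega)
    rw [← heq] at this
    exact ltJ_irrefl _ this

lemma heightSet_nonempty (x : M) :
    Set.Nonempty {k | ∃ c : ℕ → M, c k = x ∧ ∀ i < k, ltJ (c (i + 1)) (c i)} :=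
  ⟨0, fun _ => x, rfl, fun i hi => absurd hi (by omega)⟩

lemma heightSet_bdd [Finite M] (x : M) :
    BddAbove {k | ∃ c : ℕ → M, c k = x ∧ ∀ i < k, ltJ (c (i + 1)) (c i)} :=
  ⟨Nat.card M, fun _ hk => by obtain ⟨c, _, hc⟩ := hk; exact chain_le_card hc⟩

lemma height_lt_of_ltJ [Finite M] {x y : M} (h : ltJ x y) : height y < height x := by
  obtain ⟨c, hcy, hc⟩ := Nat.sSup_mem (heightSet_nonempty y) (heightSet_bdd y)
  have hcy' : c (height y) = y := hcy
  have hc' : ∀ i < height y, ltJ (c (i + 1)) (c i) := hc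
  have hmem : height y + 1 ∈
      {k | ∃ c : ℕ → M, c k = x ∧ ∀ i < k, ltJ (c (i + 1)) (c i)} := by
    refine ⟨fun i => if i ≤ height y then c i else x, if_neg (by omega), ?_⟩
    intro i hi
    show ltJ (if i + 1 ≤ height y then c (i + 1) else x)
      (if i ≤ height y then c i else x)
    by_cases h2 : i < height y
    · rw [if_pos (by omega : i + 1 ≤ height y), if_pos (by omega : i ≤ height y)]
      exact hc' i h2
    · have hin : i = height y := by omega
      rw [if_neg (by omega : ¬ i + 1 ≤ height y), if_pos (le_of_eq hin), hin, hcy']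
      exact h
  have hle : height y + 1 ≤ height x := le_csSup (heightSet_bdd x) hmem
  omega

end AuxMonoid

section AuxKR

variable {A S : Type*} [Semigroup S] [Finite S] (θ : FreeMonoid A →* WithOne S)

instance instFiniteWithOne {S' : Type*} [Finite S'] : Finite (WithOne S') := by
  have : Fintype S' := Fintype.ofFinite S'
  exact @Finite.of_fintype (WithOne S') (inferInstanceAs (Fintype (Option S')))

lemma theta_surj (hgen : ∀ s : S, ∃ u : FreeMonoid A, θ u = (s : WithOne S)) :
    ∀ z : WithOne S, ∃ u : FreeMonoid A, θ u = z := by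
  intro z
  induction z using WithOne.recOneCoe with
  | one => exact ⟨1, map_one θ⟩
  | coe s => exact hgen s

lemma trans_not_leR (hgen : ∀ s : S, ∃ u : FreeMonoid A, θ u = (s : WithOne S))
    {s : WithOne S} {a : A} (ht : IsTransitionEdge θ s a) :
    ¬ leR s (s * θ (FreeMonoid.of a)) := by
  rintro ⟨z, hz⟩
  obtain ⟨u, rfl⟩ := theta_surj θ hgen z
  exact ht ⟨u, hz.symm⟩

lemma trans_ltR (hgen : ∀ s : S, ∃ u : FreeMonoid A, θ u = (s : WithOne S))
    {s : WithOne S} {a : A} (ht : IsTransitionEdge θ s a) :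
    ltR (s * θ (FreeMonoid.of a)) s :=
  ⟨⟨θ (FreeMonoid.of a), rfl⟩, trans_not_leR θ hgen ht⟩

lemma mem_transEdgesFrom :
    ∀ (w : List A) (s : WithOne S) (e : WithOne S × A),
      e ∈ transEdgesFrom θ s w → IsTransitionEdge θ e.1 e.2 ∧ leR e.1 s := by
  intro w
  induction w with
  | nil => intro s e he; simp [transEdgesFrom] at he
  | cons a w ih =>
    intro s e he
    rw [transEdgesFrom, List.mem_append] at he
    rcases he with he | he
    · by_cases hP : IsTransitionEdge θ s a
      · rw [if_pos hP, List.mem_singleton] at he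
        subst he
        exact ⟨hP, ⟨1, (mul_one s).symm⟩⟩
      · rw [if_neg hP] at he; simp at he
    · obtain ⟨h1, h2⟩ := ih (s * θ (FreeMonoid.of a)) e he
      exact ⟨h1, leR_trans h2 ⟨θ (FreeMonoid.of a), rfl⟩⟩

lemma transEdgesFrom_chain :
    ∀ (w : List A) (s : WithOne S) (i j : ℕ) (_ : i < j)
      (hj : j < (transEdgesFrom θ s w).length),
      leR ((transEdgesFrom θ s w)[j]).1
        (edgeEnd θ ((transEdgesFrom θ s w)[i]'(by omega))) := by
  intro w
  induction w with
  | nil => intro s i j hij hj; simp [transEdgesFrom] at hj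
  | cons a w ih =>
    intro s i j hij hj
    by_cases hP : IsTransitionEdge θ s a
    · have hL : transEdgesFrom θ s (a :: w) =
          (s, a) :: transEdgesFrom θ (s * θ (FreeMonoid.of a)) w := by
        rw [transEdgesFrom, if_pos hP]; rfl
      rcases i with _ | i
      · obtain ⟨j, rfl⟩ : ∃ j', j = j' + 1 := ⟨j - 1, by omega⟩
        have hj' : j < (transEdgesFrom θ (s * θ (FreeMonoid.of a)) w).length := by
          rw [hL] at hj; simpa using hj
        have h0 : (transEdgesFrom θ s (a :: w))[0]'(by omega) = (s, a) := by
          simp [hL]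
        have hgj : (transEdgesFrom θ s (a :: w))[j + 1] =
            (transEdgesFrom θ (s * θ (FreeMonoid.of a)) w)[j]'hj' := by
          simp [hL]
        rw [h0, hgj]
        have hmem := (mem_transEdgesFrom θ _ _ _
          (List.getElem_mem hj')).2
        exact hmem
      · obtain ⟨j, rfl⟩ : ∃ j', j = j' + 1 := ⟨j - 1, by omega⟩
        have hj' : j < (transEdgesFrom θ (s * θ (FreeMonoid.of a)) w).length := by
          rw [hL] at hj; simpa using hj
        have hgj : (transEdgesFrom θ s (a :: w))[j + 1] =
            (transEdgesFrom θ (s * θ (FreeMonoid.of a)) w)[j]'hj' := by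
          simp [hL]
        have hgi : (transEdgesFrom θ s (a :: w))[i + 1]'(by omega) =
            (transEdgesFrom θ (s * θ (FreeMonoid.of a)) w)[i]'(by omega) := by
          simp [hL]
        rw [hgj, hgi]
        exact ih _ i j (by omega) hj'
    · have hL : transEdgesFrom θ s (a :: w) =
          transEdgesFrom θ (s * θ (FreeMonoid.of a)) w := by
        rw [transEdgesFrom, if_neg hP]; rfl
      have hj' : j < (transEdgesFrom θ (s * θ (FreeMonoid.of a)) w).length := by
        rw [hL] at hj; exact hj
      have hgj : (transEdgesFrom θ s (a :: w))[j] =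
          (transEdgesFrom θ (s * θ (FreeMonoid.of a)) w)[j]'hj' := by
        simp [hL]
      have hgi : (transEdgesFrom θ s (a :: w))[i]'(by omega) =
          (transEdgesFrom θ (s * θ (FreeMonoid.of a)) w)[i]'(by omega) := by
        simp [hL]
      rw [hgj, hgi]
      exact ih _ i j hij hj'

lemma edgeEnd_ltJ_source (hgen : ∀ s : S, ∃ u : FreeMonoid A, θ u = (s : WithOne S))
    {e : WithOne S × A} (ht : IsTransitionEdge θ e.1 e.2) :
    ltJ (edgeEnd θ e) e.1 :=
  ltJ_of_ltR (trans_ltR θ hgen ht)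

lemma ends_ltJ (hgen : ∀ s : S, ∃ u : FreeMonoid A, θ u = (s : WithOne S))
    (u : FreeMonoid A) {i j : ℕ} (hij : i < j) (hj : j < (transEdges θ u).length) :
    ltJ (edgeEnd θ ((transEdges θ u)[j]))
      (edgeEnd θ ((transEdges θ u)[i]'(by omega))) := by
  set L := transEdges θ u with hLdef
  have hchain : leR (L[j]).1 (edgeEnd θ (L[i]'(by omega))) :=
    transEdgesFrom_chain θ (FreeMonoid.toList u) 1 i j hij hj
  have hmemj := mem_transEdgesFrom θ (FreeMonoid.toList u) 1 (L[j]) (List.getElem_mem hj)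
  have hltR : ltR (edgeEnd θ (L[j])) (L[j]).1 := trans_ltR θ hgen hmemj.1
  apply ltJ_of_ltR
  constructor
  · exact leR_trans hltR.1 hchain
  · intro hcon
    exact hltR.2 (leR_trans hchain hcon)

lemma one_le_height_edgeEnd (hgen : ∀ s : S, ∃ u : FreeMonoid A, θ u = (s : WithOne S))
    (u : FreeMonoid A) {j : ℕ} (hj : j < (transEdges θ u).length) :
    1 ≤ height (edgeEnd θ ((transEdges θ u)[j])) := by
  have hmemj := mem_transEdgesFrom θ (FreeMonoid.toList u) 1
    ((transEdges θ u)[j]) (List.getElem_mem hj)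
  have := height_lt_of_ltJ (edgeEnd_ltJ_source θ hgen hmemj.1)
  omega

lemma two_height_le_ell (x : WithOne S) : 2 * height x ≤ ell S := by
  rw [ell]
  have : height x ≤ sSup (Set.range fun s : WithOne S => height s) :=
    le_csSup ((Set.finite_range _).bddAbove) ⟨x, rfl⟩
  omega

lemma xi_mem (u v : FreeMonoid A) :
    xi θ u v ≤ (transEdges θ u).length ∧
      (transEdges θ u).take (xi θ u v) = (transEdges θ v).take (xi θ u v) := by
  have := Nat.sSup_mem (s := {i | i ≤ (transEdges θ u).length ∧
      (transEdges θ u).take i = (transEdges θ v).take i})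
    ⟨0, by simp⟩ ⟨(transEdges θ u).length, fun k hk => hk.1⟩
  exact this

end AuxKR

end KRHolonomy


open KRHolonomy in
/-- For all `α, β, γ ∈ T¹ = KR_right(S,A)¹`, if `α ≠ β` (in `T¹`) and
`ξ(α,β) < ξ(α,γ)`, then `D(α,β) < D(α,γ)`. -/
theorem lcD_lt_of_xi_lt {A S : Type*} [Finite A] [Semigroup S] [Finite S]
    (θ : FreeMonoid A →* WithOne S)
    (hgen : ∀ s : S, ∃ u : FreeMonoid A, θ u = (s : WithOne S))
    (hproper : ∀ u : FreeMonoid A, θ u = 1 → u = 1)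
    (α β γ : FreeMonoid A) (hne : ¬ KRrel θ α β) (hxi : xi θ α β < xi θ α γ) :
    lcD θ α β < lcD θ α γ := by
  set L := transEdges θ α with hL
  set m := L.length with hm
  set k := xi θ α β with hk
  set k' := xi θ α γ with hk'
  have hk'm : k' ≤ m := (xi_mem θ α γ).1
  have hk'pos : 0 < k' := by omega
  have hk'idx : k' - 1 < m := by omega
  -- height at index k'-1 is at least 1
  have hH' : 1 ≤ height (edgeEnd θ (L[k' - 1]'hk'idx)) :=
    one_le_height_edgeEnd θ hgen α hk'idx
  -- lower bound for lcD θ α γ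
  have hlow : 2 * height (edgeEnd θ (L[k' - 1]'hk'idx)) - 1 ≤ lcD θ α γ := by
    rw [lcD]
    by_cases hKR : KRrel θ α γ
    · rw [if_pos hKR]
      have := two_height_le_ell (S := S) (edgeEnd θ (L[k' - 1]'hk'idx))
      omega
    · rw [if_neg hKR, if_neg (show ¬ xi θ α γ = 0 by rw [← hk']; omega)]
      have hsome : (transEdges θ α)[xi θ α γ - 1]? = some (L[k' - 1]'hk'idx) := by
        rw [← hk', ← hL]
        exact List.getElem?_eq_getElem hk'idx
      simp only [hsome, Option.elim_some]
      split <;> omega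
  by_cases hk0 : k = 0
  · -- lcD θ α β = 0
    have hzero : lcD θ α β = 0 := by
      rw [lcD, if_neg hne, if_pos (show xi θ α β = 0 by rw [← hk]; exact hk0)]
    omega
  · have hkidx : k - 1 < m := by omega
    have hkk' : k - 1 < k' - 1 := by omega
    have hmono : height (edgeEnd θ (L[k - 1]'hkidx)) <
        height (edgeEnd θ (L[k' - 1]'hk'idx)) :=
      height_lt_of_ltJ (ends_ltJ θ hgen α hkk' hk'idx)
    have hup : lcD θ α β ≤ 2 * height (edgeEnd θ (L[k - 1]'hkidx)) := by
      rw [lcD, if_neg hne, if_neg (show ¬ xi θ α β = 0 by rw [← hk]; exact hk0)]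
      have hsome : (transEdges θ α)[xi θ α β - 1]? = some (L[k - 1]'hkidx) := by
        rw [← hk, ← hL]
        exact List.getElem?_eq_getElem hkidx
      simp only [hsome, Option.elim_some]
      split <;> omega
    omega
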